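/- Let N be a normal subgroup of G. Under the bijection [γ] ↦ [ρ_γ] between H^1(N, Der) and equivalence classes of lifts of ρ|_N to k[ε] (given by ρ_γ(n)(x₀+εx₁) = ρ(n)(x₀) + ε(ρ(n)(x₁) + γ_n(ρ(n)(x₀)))), the action of g ∈ G on classes of lifts given by (g_*ρ_γ)(n) = r_g ∘ ρ_γ(g^{-1}ng) ∘ r_g^{-1} (r_g any lift of ρ(g)) corresponds to the standard action on group cohomology: g_*[ρ_γ] = [ρ_{γ^{(g)}}] where γ^{(g)}_n = g·γ_{g^{-1}ng}. Moreover, restricting a lift of ρ to the subgroup N corresponds under these bijections to the restriction map H^1(G, Der) → H^1(N, Der) on cocycles. -/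

import Mathlib

open PowerSeries

/-- coefficientwise inclusion `k[[t]] → k[ε][[t]]`. -/
noncomputable def inclEps (k : Type) [Field k] :
    PowerSeries k →+* PowerSeries (DualNumber k) :=
  PowerSeries.map (algebraMap k (DualNumber k))

/-- coefficientwise reduction `k[ε][[t]] → k[[t]]` modulo `(ε)`. -/
noncomputable def redEps (k : Type) [Field k] :
    PowerSeries (DualNumber k) →+* PowerSeries k :=
  PowerSeries.map (TrivSqZeroExt.fstHom k k k).toRingHom

/-- the constant power series `ε ∈ k[ε][[t]]`. -/
noncomputable def epsC (k : Type) [Field k] : PowerSeries (DualNumber k) :=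
  PowerSeries.C (DualNumber.eps : DualNumber k)

section Aux

variable (k : Type) [Field k]

/-- the ε-part, coefficientwise. -/
noncomputable def sndEps : PowerSeries (DualNumber k) →+ PowerSeries k where
  toFun f := PowerSeries.mk fun n => (PowerSeries.coeff n f).snd
  map_zero' := by ext n; simp
  map_add' f g := by ext n; simp

variable {k}

lemma red_incl (x : PowerSeries k) : redEps k (inclEps k x) = x := by
  ext n; simp [redEps, inclEps, PowerSeries.coeff_map]

lemma snd_incl (x : PowerSeries k) : sndEps k (inclEps k x) = 0 := by
  ext n; simp [sndEps, inclEps, PowerSeries.coeff_map, TrivSqZeroExt.algebraMap_eq_inl]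

lemma red_epsmul (f : PowerSeries (DualNumber k)) : redEps k (epsC k * f) = 0 := by
  ext n
  simp [redEps, epsC, PowerSeries.coeff_map, PowerSeries.coeff_C_mul]

lemma eps_mul_inl (a : k) : (DualNumber.eps * TrivSqZeroExt.inl a : DualNumber k)
    = TrivSqZeroExt.inr a := by
  rw [mul_comm, DualNumber.eps, TrivSqZeroExt.inl_mul_inr, smul_eq_mul, mul_one]

lemma snd_epsmul (x : PowerSeries k) : sndEps k (epsC k * inclEps k x) = x := by
  ext n
  simp only [sndEps, AddMonoidHom.coe_mk, ZeroHom.coe_mk, PowerSeries.coeff_mk,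
    epsC, PowerSeries.coeff_C_mul, inclEps, PowerSeries.coeff_map,
    TrivSqZeroExt.algebraMap_eq_inl, eps_mul_inl, TrivSqZeroExt.snd_inr]

lemma decomp_eq (f : PowerSeries (DualNumber k)) :
    f = inclEps k (redEps k f) + epsC k * inclEps k (sndEps k f) := by
  ext n <;>
  simp [epsC, inclEps, redEps, sndEps, PowerSeries.coeff_map, PowerSeries.coeff_C_mul,
    TrivSqZeroExt.algebraMap_eq_inl, eps_mul_inl]

end Aux

section Lift

variable {k : Type} [Field k] {G : Type} [Group G]
  (ρ : G →* (PowerSeries k ≃ₐ[k] PowerSeries k))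

lemma exists_decomp (f : PowerSeries (DualNumber k)) :
    ∃ a b : PowerSeries k, f = inclEps k a + epsC k * inclEps k b :=
  ⟨_, _, decomp_eq f⟩

lemma epsC_sq : (epsC k) * epsC k = 0 := by
  rw [epsC, ← map_mul, DualNumber.eps_mul_eps, map_zero]

lemma mul_decomp (a b c d : PowerSeries k) :
    (inclEps k a + epsC k * inclEps k b) * (inclEps k c + epsC k * inclEps k d) =
      inclEps k (a * c) + epsC k * inclEps k (a * d + b * c) := by
  rw [map_mul, map_add, map_mul, map_mul]
  linear_combination (inclEps k b * inclEps k d) * epsC_sq (k := k)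

lemma rho_mul_apply (g h : G) (x : PowerSeries k) : ρ (g * h) x = ρ g (ρ h x) := by
  rw [map_mul]; rfl

lemma rho_inv_apply (g : G) (x : PowerSeries k) : ρ g (ρ g⁻¹ x) = x := by
  rw [← rho_mul_apply, mul_inv_cancel, map_one]; rfl

lemma rho_C (g : G) (a : k) : ρ g (PowerSeries.C (R := k) a) = PowerSeries.C (R := k) a := by
  rw [PowerSeries.C_eq_algebraMap]; exact (ρ g).commutes a

/-- the trivial lift of `ρ h` to `k[ε]`, as a bare function. -/
noncomputable def Tfun (h : G) : PowerSeries (DualNumber k) → PowerSeries (DualNumber k) :=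
  fun x => inclEps k (ρ h (redEps k x)) + epsC k * inclEps k (ρ h (sndEps k x))

lemma Tfun_apply (h : G) (a b : PowerSeries k) :
    Tfun ρ h (inclEps k a + epsC k * inclEps k b) =
      inclEps k (ρ h a) + epsC k * inclEps k (ρ h b) := by
  simp [Tfun, map_add, red_incl, red_epsmul, snd_incl, snd_epsmul]

lemma Tfun_comp (h h' : G) (x : PowerSeries (DualNumber k)) :
    Tfun ρ h (Tfun ρ h' x) = Tfun ρ (h * h') x := by
  obtain ⟨a, b, rfl⟩ := exists_decomp x
  rw [Tfun_apply, Tfun_apply, Tfun_apply, rho_mul_apply, rho_mul_apply]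

lemma Tfun_one (x : PowerSeries (DualNumber k)) : Tfun ρ 1 x = x := by
  obtain ⟨a, b, rfl⟩ := exists_decomp x
  rw [Tfun_apply]
  simp [map_one]

lemma C_decomp (z : DualNumber k) :
    PowerSeries.C (R := DualNumber k) z =
      inclEps k (PowerSeries.C (R := k) z.fst) + epsC k * inclEps k (PowerSeries.C (R := k) z.snd) := by
  have h1 : inclEps k (PowerSeries.C (R := k) z.fst)
      = PowerSeries.C (R := DualNumber k) (TrivSqZeroExt.inl z.fst) := by
    simp [inclEps, PowerSeries.map_C, TrivSqZeroExt.algebraMap_eq_inl]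
  have h2 : epsC k * inclEps k (PowerSeries.C (R := k) z.snd)
      = PowerSeries.C (R := DualNumber k) (TrivSqZeroExt.inr z.snd) := by
    simp only [inclEps, PowerSeries.map_C, TrivSqZeroExt.algebraMap_eq_inl, epsC]
    rw [← map_mul, eps_mul_inl]
  rw [h1, h2, ← map_add, TrivSqZeroExt.inl_fst_add_inr_snd_eq]

/-- the trivial lift of `ρ h` to `k[ε]`. -/
noncomputable def Tequiv (h : G) :
    PowerSeries (DualNumber k) ≃ₐ[DualNumber k] PowerSeries (DualNumber k) where
  toFun := Tfun ρ h
  invFun := Tfun ρ h⁻¹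
  left_inv x := by rw [Tfun_comp, inv_mul_cancel, Tfun_one]
  right_inv x := by rw [Tfun_comp, mul_inv_cancel, Tfun_one]
  map_add' x y := by
    show Tfun ρ h _ = Tfun ρ h _ + Tfun ρ h _
    obtain ⟨a, b, rfl⟩ := exists_decomp x
    obtain ⟨c, d, rfl⟩ := exists_decomp y
    have : (inclEps k a + epsC k * inclEps k b) + (inclEps k c + epsC k * inclEps k d)
        = inclEps k (a + c) + epsC k * inclEps k (b + d) := by
      rw [map_add, map_add]; ring
    rw [this, Tfun_apply, Tfun_apply, Tfun_apply, map_add, map_add, map_add, map_add]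
    ring
  map_mul' x y := by
    show Tfun ρ h _ = Tfun ρ h _ * Tfun ρ h _
    obtain ⟨a, b, rfl⟩ := exists_decomp x
    obtain ⟨c, d, rfl⟩ := exists_decomp y
    rw [mul_decomp, Tfun_apply, Tfun_apply, Tfun_apply, mul_decomp, map_mul, map_add,
      map_mul, map_mul, map_mul]
  commutes' z := by
    show Tfun ρ h (PowerSeries.C (R := DualNumber k) z) = PowerSeries.C (R := DualNumber k) z
    rw [C_decomp, Tfun_apply, rho_C, rho_C, ← C_decomp]

lemma Tequiv_apply (h : G) (x) : Tequiv ρ h x = Tfun ρ h x := rfl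

lemma Tequiv_symm_apply (h : G) (x) : (Tequiv ρ h).symm x = Tfun ρ h⁻¹ x := rfl

lemma red_Tfun (h : G) (x) : redEps k (Tfun ρ h x) = ρ h (redEps k x) := by
  simp [Tfun, map_add, red_incl, red_epsmul]

end Lift

/-- `P s`, for `s` in the subgroup `N`, is given by the twisting formula
`ρ_γ(s)(x₀ + εx₁) = ρ(s)(x₀) + ε(ρ(s)(x₁) + γ_s(ρ(s)(x₀)))`. -/
def IsTwistLiftOn {k : Type} [Field k] {G : Type} [Group G] (N : Subgroup G)
    (ρ : G →* (PowerSeries k ≃ₐ[k] PowerSeries k))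
    (γ : G → Derivation k (PowerSeries k) (PowerSeries k))
    (P : G → (PowerSeries (DualNumber k) ≃ₐ[DualNumber k] PowerSeries (DualNumber k))) :
    Prop :=
  ∀ s ∈ N, ∀ (x₀ x₁ : PowerSeries k),
    P s (inclEps k x₀ + epsC k * inclEps k x₁) =
      inclEps k (ρ s x₀) + epsC k * inclEps k (ρ s x₁ + γ s (ρ s x₀))

/-- Under the correspondence `[γ] ↦ [ρ_γ]` between `H¹(N, Der)` and
classes of lifts of `ρ|_N` to `k[ε]`, the action `(g_*ρ_γ)(n) = r_g ρ_γ(g⁻¹ng) r_g⁻¹`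
corresponds to the standard cohomological action `g_*[γ] = [n ↦ g·γ_{g⁻¹ng}]`;
moreover restriction of lifts from `G` to `N` corresponds to the restriction of
cocycles. -/
theorem statement5
    (p : ℕ) [Fact p.Prime]
    (k : Type) [Field k] [CharP k p] [PerfectField k]
    (G : Type) [Group G] [Finite G]
    (ρ : G →* (PowerSeries k ≃ₐ[k] PowerSeries k)) (hρ : Function.Injective ρ)
    (N : Subgroup G) (hN : N.Normal) :
    -- the action corresponds to the standard action on cohomology
    (∀ (γ γ' : G → Derivation k (PowerSeries k) (PowerSeries k))
       (P P' : G → (PowerSeries (DualNumber k) ≃ₐ[DualNumber k] PowerSeries (DualNumber k)))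
       (g : G) (r : PowerSeries (DualNumber k) ≃ₐ[DualNumber k] PowerSeries (DualNumber k)),
      -- `γ` is a 1-cocycle on `N` and `P = ρ_γ`
      (∀ s ∈ N, ∀ t ∈ N, ∀ x, γ (s * t) x = γ s x + ρ s (γ t (ρ s⁻¹ x))) →
      IsTwistLiftOn N ρ γ P →
      -- `γ'` is the twisted cocycle `s ↦ g·γ_{g⁻¹sg}` and `P' = ρ_{γ'}`
      (∀ s ∈ N, ∀ x, γ' s x = ρ g (γ (g⁻¹ * s * g) (ρ g⁻¹ x))) →
      IsTwistLiftOn N ρ γ' P' →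
      -- `r` is a lift of `ρ(g)` to `k[ε]`
      (∀ x, redEps k (r x) = ρ g (redEps k x)) →
      -- then `g_*ρ_γ` is equivalent to `ρ_{γ'}`
      ∃ χ : PowerSeries (DualNumber k) ≃ₐ[DualNumber k] PowerSeries (DualNumber k),
        (∀ x, redEps k (χ x) = redEps k x) ∧
        ∀ s ∈ N, ∀ x, r (P (g⁻¹ * s * g) (r⁻¹ x)) = χ (P' s (χ⁻¹ x))) ∧
    -- restricting lifts corresponds to restricting cocycles
    (∀ (γ : G → Derivation k (PowerSeries k) (PowerSeries k))
       (P : G → (PowerSeries (DualNumber k) ≃ₐ[DualNumber k] PowerSeries (DualNumber k))),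
      (∀ (g : G) (x₀ x₁ : PowerSeries k),
        P g (inclEps k x₀ + epsC k * inclEps k x₁) =
          inclEps k (ρ g x₀) + epsC k * inclEps k (ρ g x₁ + γ g (ρ g x₀))) →
      IsTwistLiftOn N ρ γ P) := by
  constructor
  · intro γ γ' P P' g r hcoc hP hγ' hP' hr
    -- the key conjugation identity for the trivial lift `Tequiv ρ g`
    have hsN : ∀ s ∈ N, g⁻¹ * s * g ∈ N := by
      intro s hs
      have := hN.conj_mem s hs g⁻¹
      simpa using this
    have key : ∀ s ∈ N, ∀ y, Tequiv ρ g (P (g⁻¹ * s * g) y) = P' s (Tequiv ρ g y) := by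
      intro s hs y
      obtain ⟨a, b, rfl⟩ := exists_decomp y
      rw [hP _ (hsN s hs), Tequiv_apply, Tequiv_apply, Tfun_apply, Tfun_apply,
        hP' s hs]
      have e1 : ∀ x : PowerSeries k, ρ g (ρ (g⁻¹ * s * g) x) = ρ s (ρ g x) := by
        intro x
        rw [← rho_mul_apply, ← rho_mul_apply]
        congr 1
        group
      have e2 : γ' s (ρ s (ρ g a)) = ρ g (γ (g⁻¹ * s * g) (ρ (g⁻¹ * s * g) a)) := by
        rw [hγ' s hs]
        congr 1
        rw [← rho_mul_apply, ← rho_mul_apply]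
      rw [map_add, e1, e1, e2]
    refine ⟨((Tequiv ρ g).symm).trans r, ?_, ?_⟩
    · intro x
      rw [AlgEquiv.trans_apply, hr, Tequiv_symm_apply, red_Tfun, rho_inv_apply]
    · intro s hs x
      have hinv : ∀ f : PowerSeries (DualNumber k) ≃ₐ[DualNumber k] PowerSeries (DualNumber k),
          f⁻¹ = f.symm := fun _ => rfl
      rw [hinv, hinv]
      have hsymm : (((Tequiv ρ g).symm).trans r).symm x = Tequiv ρ g (r.symm x) := by
        simp
      rw [hsymm, AlgEquiv.trans_apply, ← key s hs (r.symm x), AlgEquiv.symm_apply_apply]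
  · intro γ P h s _ x₀ x₁
    exact h s x₀ x₁
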